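/- Let Ω ⊆ ℝ^d be open with nonempty boundary and let x ∈ ∂Ω be an LCDD boundary point in standard position. Then the inward sector equals the Bouligand tangent cone: I_x(closure(Ω)) = T^B_x(closure(Ω)). -/

import Mathlib

open Set Topology Filter MeasureTheory

noncomputable section

/-- The epigraph of `γ : ℝ^{d-1} → ℝ`, as a subset of `ℝ^d ≃ ℝ^{d-1} × ℝ`. -/
def epi {n : ℕ} (γ : EuclideanSpace ℝ (Fin n) → ℝ) : Set (EuclideanSpace ℝ (Fin n) × ℝ) :=
  {y | γ y.1 ≤ y.2}

/-- The strict epigraph of `γ`. -/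
def epiStrict {n : ℕ} (γ : EuclideanSpace ℝ (Fin n) → ℝ) : Set (EuclideanSpace ℝ (Fin n) × ℝ) :=
  {y | γ y.1 < y.2}

/-- The Bouligand tangent cone of `A` at `a`: `0` together with all `v ≠ 0` such that there is a
sequence `(u m)` in `A` with `u m ≠ a`, `u m → a`, and `(u m - a)/‖u m - a‖ → v/‖v‖`. -/
def bouligand {E : Type*} [NormedAddCommGroup E] [NormedSpace ℝ E] (A : Set E) (a : E) :
    Set E :=
  {0} ∪ {v | v ≠ 0 ∧ ∃ u : ℕ → E, (∀ m, u m ∈ A) ∧ (∀ m, u m ≠ a) ∧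
    Tendsto u atTop (nhds a) ∧
    Tendsto (fun m => ‖u m - a‖⁻¹ • (u m - a)) atTop (nhds (‖v‖⁻¹ • v))}

/-- The open feasible direction cone of `Ω` at `x`. -/
def feasible {E : Type*} [AddCommGroup E] [Module ℝ E] (Ω : Set E) (x : E) : Set E :=
  {v | ∃ tv > (0 : ℝ), ∀ t ∈ Set.Ioo (0 : ℝ) tv, x + t • v ∈ Ω}

/-- The inward sector of `A` at `x`: all velocities `c'(0)` of `C¹` curves
`c : (-ε, ε) → E` with `c 0 = x` and `c t ∈ A` for `t ∈ [0, ε)`. -/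
def inwardSector {E : Type*} [NormedAddCommGroup E] [NormedSpace ℝ E] (A : Set E) (x : E) :
    Set E :=
  {v | ∃ ε > (0 : ℝ), ∃ c : ℝ → E, ContDiffOn ℝ 1 c (Set.Ioo (-ε) ε) ∧ c 0 = x ∧
    (∀ t ∈ Set.Ico (0 : ℝ) ε, c t ∈ A) ∧ HasDerivWithinAt c v (Set.Ioo (-ε) ε) 0}

set_option maxHeartbeats 2000000 in
open intervalIntegral in
lemma exists_c1_majorant (φ : ℝ → ℝ) (L : ℝ) (hL : 0 ≤ L)
    (hφL : ∀ u, 0 < u → φ u ≤ L * u)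
    (hsmall : ∀ ε > (0:ℝ), ∃ δ > (0:ℝ), ∀ u, 0 < u → u < δ → φ u ≤ ε * u) :
    ∃ η : ℝ → ℝ, ContDiff ℝ 1 η ∧ η 0 = 0 ∧ HasDerivAt η 0 0 ∧
      (∀ t, 0 < t → φ t ≤ η t) ∧ (∀ t, 0 ≤ t → 0 ≤ η t ∧ η t ≤ L * t) := by
  classical
  set F : ℝ → ℝ := fun u => max (φ u / u) 0 with hF
  have hFle : ∀ u, 0 < u → F u ≤ L := fun u hu =>
    max_le ((div_le_iff₀ hu).2 (hφL u hu)) hL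
  set M : ℝ → ℝ := fun s => sSup (F '' Ioc 0 s) with hM
  have hbdd : ∀ s, BddAbove (F '' Ioc 0 s) := by
    intro s
    refine ⟨L, ?_⟩
    rintro y ⟨u, hu, rfl⟩
    exact hFle u hu.1
  have hM0 : ∀ s, s ≤ 0 → M s = 0 := by
    intro s hs
    simp [hM, Ioc_eq_empty (by intro h; linarith : ¬ (0:ℝ) < s), Real.sSup_empty]
  have hMF : ∀ s, 0 < s → F s ≤ M s := fun s hs =>
    le_csSup (hbdd s) ⟨s, ⟨hs, le_refl s⟩, rfl⟩
  have hMnonneg : ∀ s, 0 ≤ M s := by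
    intro s
    rcases le_or_gt s 0 with h | h
    · rw [hM0 s h]
    · exact le_trans (le_max_right _ 0) (hMF s h)
  have hMle : ∀ s, M s ≤ L := by
    intro s
    apply Real.sSup_le _ hL
    rintro y ⟨u, hu, rfl⟩
    exact hFle u hu.1
  have hMmono : Monotone M := by
    intro s s' hss
    rcases le_or_gt s 0 with h | h
    · rw [hM0 s h]; exact hMnonneg s'
    · exact csSup_le_csSup (hbdd s') (⟨F s, ⟨s, ⟨h, le_refl s⟩, rfl⟩⟩)
        (image_mono (f := F) (Ioc_subset_Ioc_right hss))
  have hMsmall : ∀ ε > (0:ℝ), ∃ δ > (0:ℝ), ∀ s, 0 ≤ s → s < δ → M s ≤ ε := by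
    intro ε hε
    obtain ⟨δ, hδ, hδε⟩ := hsmall ε hε
    refine ⟨δ, hδ, fun s hs hsδ => ?_⟩
    rcases eq_or_lt_of_le hs with h | h
    · rw [hM0 s h.symm.le]; exact hε.le
    · apply Real.sSup_le _ hε.le
      rintro y ⟨u, hu, rfl⟩
      exact max_le ((div_le_iff₀ hu.1).2 (hδε u hu.1 (lt_of_le_of_lt hu.2 hsδ))) hε.le
  have hMint : ∀ a b : ℝ, IntervalIntegrable M volume a b := fun a b =>
    hMmono.intervalIntegrable
  set G : ℝ → ℝ := fun t => ∫ s in (0:ℝ)..t, M s with hG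
  have hGcont : Continuous G := intervalIntegral.continuous_primitive hMint 0
  have hGadd : ∀ t : ℝ, G (2*t) - G t = ∫ s in t..(2*t), M s := by
    intro t
    have := integral_add_adjacent_intervals (hMint 0 t) (hMint t (2*t))
    simp only [hG]
    linarith [this]
  -- bounds for the interval integral ∫_t^{2t} M for t > 0
  have hIlb : ∀ t : ℝ, 0 < t → t * M t ≤ ∫ s in t..(2*t), M s := by
    intro t ht
    have h1 : ∫ s in t..(2*t), M t ≤ ∫ s in t..(2*t), M s := by
      apply integral_mono_on (by linarith) (intervalIntegrable_const) (hMint t (2*t))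
      intro u hu
      exact hMmono hu.1
    have h2 : (∫ _ in t..(2*t), M t) = t * M t := by
      rw [intervalIntegral.integral_const, smul_eq_mul]; ring
    linarith [h1, h2.symm.le]
  have hIub : ∀ t : ℝ, 0 < t → (∫ s in t..(2*t), M s) ≤ t * M (2*t) := by
    intro t ht
    have h1 : ∫ s in t..(2*t), M s ≤ ∫ s in t..(2*t), M (2*t) := by
      apply integral_mono_on (by linarith) (hMint t (2*t)) (intervalIntegrable_const)
      intro u hu
      exact hMmono hu.2
    have h2 : (∫ _ in t..(2*t), M (2*t)) = t * M (2*t) := by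
      rw [intervalIntegral.integral_const, smul_eq_mul]; ring
    linarith
  have hGneg : ∀ t : ℝ, t ≤ 0 → G t = 0 := by
    intro t ht
    have he : EqOn M (fun _ => (0:ℝ)) (uIcc 0 t) := by
      intro u hu
      rw [uIcc_of_ge ht] at hu
      exact hM0 u hu.2
    simp only [hG]
    rw [intervalIntegral.integral_congr he]
    simp
  set M₂ : ℝ → ℝ := fun s => (G (2*s) - G s) / s with hM₂
  have hM₂neg : ∀ s : ℝ, s ≤ 0 → M₂ s = 0 := by
    intro s hs
    simp [hM₂, hGneg (2*s) (by linarith), hGneg s hs]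
  have hM₂ge : ∀ s, 0 < s → M s ≤ M₂ s := by
    intro s hs
    rw [hM₂, le_div_iff₀ hs, hGadd s]
    calc M s * s = s * M s := mul_comm _ _
    _ ≤ _ := hIlb s hs
  have hM₂le : ∀ s, 0 < s → M₂ s ≤ M (2*s) := by
    intro s hs
    rw [hM₂]
    rw [div_le_iff₀ hs, hGadd s]
    calc (∫ u in s..(2*s), M u) ≤ s * M (2*s) := hIub s hs
    _ = M (2*s) * s := mul_comm _ _
  have hM₂nonneg : ∀ s, 0 ≤ M₂ s := by
    intro s
    rcases le_or_gt s 0 with h | h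
    · rw [hM₂neg s h]
    · exact le_trans (hMnonneg s) (hM₂ge s h)
  have hM₂L : ∀ s, M₂ s ≤ L := by
    intro s
    rcases le_or_gt s 0 with h | h
    · rw [hM₂neg s h]; exact hL
    · exact le_trans (hM₂le s h) (hMle _)
  have hM₂cont : Continuous M₂ := by
    rw [continuous_iff_continuousAt]
    intro s
    rcases eq_or_ne s 0 with rfl | hs
    · -- continuity at 0 by squeeze
      rw [Metric.continuousAt_iff]
      intro ε hε
      obtain ⟨δ, hδ, hδε⟩ := hMsmall (ε/2) (by linarith)
      refine ⟨δ/2, by linarith, ?_⟩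
      intro y hy
      rw [Real.dist_eq, hM₂neg 0 le_rfl, sub_zero]
      rcases le_or_gt y 0 with h | h
      · rw [hM₂neg y h]; simpa using hε
      · rw [abs_of_nonneg (hM₂nonneg y)]
        have : M₂ y ≤ M (2*y) := hM₂le y h
        have h2 : M (2*y) ≤ ε/2 := by
          apply hδε (2*y) (by linarith)
          rw [Real.dist_eq, sub_zero, abs_of_pos h] at hy
          linarith
        linarith
    · have : ContinuousAt (fun u => (G (2*u) - G u) / u) s := by
        exact ((hGcont.comp (continuous_const.mul continuous_id)).sub hGcont).continuousAt.div
          continuousAt_id hs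
      exact this
  -- primitive of M₂
  set P : ℝ → ℝ := fun t => ∫ s in (0:ℝ)..t, M₂ s with hP
  have hPd : ∀ t : ℝ, HasDerivAt P (M₂ t) t := fun t =>
    (hM₂cont.integral_hasStrictDerivAt 0 t).hasDerivAt
  have hPC : ContDiff ℝ 1 P := by
    rw [contDiff_one_iff_deriv]
    constructor
    · exact fun t => (hPd t).differentiableAt
    · have : deriv P = M₂ := funext fun t => (hPd t).deriv
      rw [this]; exact hM₂cont
  set η : ℝ → ℝ := fun t => P (2*t) - P t with hη
  have hηC : ContDiff ℝ 1 η := (hPC.comp (contDiff_const.mul contDiff_id)).sub hPC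
  have hη0 : η 0 = 0 := by simp [hη]
  have hPadd : ∀ t : ℝ, η t = ∫ s in t..(2*t), M₂ s := by
    intro t
    have := integral_add_adjacent_intervals (hM₂cont.intervalIntegrable (μ := volume) 0 t)
      (hM₂cont.intervalIntegrable (μ := volume) t (2*t))
    simp only [hη, hP]
    linarith [this]
  have hηd : HasDerivAt η 0 0 := by
    have h2 : HasDerivAt (fun t : ℝ => 2*t) 2 0 := by
      simpa using (hasDerivAt_id (0:ℝ)).const_mul 2
    have hc : HasDerivAt (fun t : ℝ => P (2*t)) (M₂ (2*0) * 2) 0 := (hPd (2*0)).comp 0 h2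
    have := hc.sub (hPd 0)
    have hz : M₂ (2*0) * 2 - M₂ 0 = 0 := by
      rw [hM₂neg 0 le_rfl, hM₂neg (2*0) (by norm_num)]; ring
    rw [hz] at this
    exact this
  refine ⟨η, hηC, hη0, hηd, ?_, ?_⟩
  · intro t ht
    have h1 : ∫ s in t..(2*t), M t ≤ ∫ s in t..(2*t), M₂ s := by
      apply integral_mono_on (by linarith) intervalIntegrable_const
        (hM₂cont.intervalIntegrable (μ := volume) t (2*t))
      intro u hu
      exact le_trans (hMmono hu.1) (hM₂ge u (lt_of_lt_of_le ht hu.1))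
    have h2 : t * M t ≤ η t := by
      rw [hPadd t]
      have h2 : (∫ _ in t..(2*t), M t) = t * M t := by
        rw [intervalIntegral.integral_const, smul_eq_mul]; ring
      linarith
    have h3 : φ t ≤ t * M t := by
      have : φ t / t ≤ M t := le_trans (le_max_left _ _) (hMF t ht)
      calc φ t = (φ t / t) * t := by field_simp
      _ ≤ M t * t := mul_le_mul_of_nonneg_right this ht.le
      _ = t * M t := mul_comm _ _
    linarith
  · intro t ht
    rcases eq_or_lt_of_le ht with rfl | ht'
    · simp [hη0]
    constructor
    · rw [hPadd t]
      apply intervalIntegral.integral_nonneg (by linarith)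
      intro u _
      exact hM₂nonneg u
    · rw [hPadd t]
      have h1 : ∫ s in t..(2*t), M₂ s ≤ ∫ s in t..(2*t), L := by
        apply integral_mono_on (by linarith) (hM₂cont.intervalIntegrable (μ := volume) t (2*t))
          intervalIntegrable_const
        intro u _
        exact hM₂L u
      have h2 : (∫ _ in t..(2*t), L) = L * t := by
        rw [intervalIntegral.integral_const, smul_eq_mul]; ring
      linarith

set_option maxHeartbeats 2000000 in
/-- at an LCDD boundary point `x` of an open set `Ω` in standard position, the
inward sector of `closure Ω` at `x` equals the Bouligand tangent cone of `closure Ω` at `x`. -/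
theorem stmt_7 (n : ℕ) (hn : 1 ≤ n) (Ω : Set (EuclideanSpace ℝ (Fin n) × ℝ))
    (hΩ : IsOpen Ω) (hbd : (frontier Ω).Nonempty)
    (x : EuclideanSpace ℝ (Fin n) × ℝ) (hx : x ∈ frontier Ω)
    (δ : ℝ) (hδ : 0 < δ) (K : NNReal) (γ : EuclideanSpace ℝ (Fin n) → ℝ)
    (hγ : LipschitzWith K γ)
    (hcl : closure Ω ∩ Metric.ball x δ = epi γ ∩ Metric.ball x δ)
    (hop : Ω ∩ Metric.ball x δ = epiStrict γ ∩ Metric.ball x δ)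
    (g : EuclideanSpace ℝ (Fin n) → ℝ) (hgc : Continuous g)
    (hg : ∀ v' : EuclideanSpace ℝ (Fin n),
      Tendsto (fun t : ℝ => (γ (x.1 + t • v') - γ x.1) / t) (𝓝[>] 0) (𝓝 (g v'))) :
    inwardSector (closure Ω) x = bouligand (closure Ω) x := by
  simp only [inwardSector, bouligand, epi, epiStrict] at *
  have hxcl : x ∈ closure Ω := frontier_subset_closure hx
  have hxball : x ∈ Metric.ball x δ := Metric.mem_ball_self hδ
  have hmemcl : ∀ y : EuclideanSpace ℝ (Fin n) × ℝ, y ∈ Metric.ball x δ →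
      (y ∈ closure Ω ↔ γ y.1 ≤ y.2) := by
    intro y hy
    constructor
    · intro h
      exact ((Set.ext_iff.1 hcl y).1 ⟨h, hy⟩).1
    · intro h
      exact ((Set.ext_iff.1 hcl y).2 ⟨h, hy⟩).1
  have hγx : γ x.1 = x.2 := by
    have h1 : γ x.1 ≤ x.2 := (hmemcl x hxball).1 hxcl
    have hxnot : x ∉ Ω := by
      intro hcon
      rw [hΩ.frontier_eq] at hx
      exact hx.2 hcon
    have h2 : ¬ γ x.1 < x.2 := by
      intro hlt
      exact hxnot ((Set.ext_iff.1 hop x).2 ⟨hlt, hxball⟩).1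
    linarith [not_lt.1 h2]
  ext v
  simp only [mem_setOf_eq, mem_union, mem_singleton_iff]
  constructor
  · -- inward ⊆ bouligand
    intro hmem
    by_cases hv : v = 0
    · exact Or.inl hv
    right
    obtain ⟨ε, hε, c, hcC, hc0, hcmem, hcd⟩ := hmem
    set t : ℕ → ℝ := fun m => ε / (m + 2) with htdef
    have htpos : ∀ m, 0 < t m := fun m => div_pos hε (by positivity)
    have htlt : ∀ m, t m < ε := by
      intro m
      rw [htdef]
      rw [div_lt_iff₀ (by positivity)]
      nlinarith [htpos m]
    have htmem : ∀ m, t m ∈ Set.Ioo (-ε) ε \ {(0:ℝ)} := by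
      intro m
      refine ⟨⟨by linarith [htpos m], htlt m⟩, ?_⟩
      simp only [mem_singleton_iff]
      exact (htpos m).ne'
    have ht0 : Tendsto t atTop (𝓝 0) := by
      apply Tendsto.div_atTop tendsto_const_nhds
      exact tendsto_atTop_add_const_right _ 2 tendsto_natCast_atTop_atTop
    have htW : Tendsto t atTop (𝓝[Set.Ioo (-ε) ε \ {(0:ℝ)}] 0) :=
      tendsto_nhdsWithin_of_tendsto_nhds_of_eventually_within t ht0
        (Eventually.of_forall htmem)
    have hslope := hasDerivWithinAt_iff_tendsto_slope.1 hcd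
    have hs : Tendsto (fun m => slope c 0 (t m)) atTop (𝓝 v) := hslope.comp htW
    have hsnorm : Tendsto (fun m => ‖slope c 0 (t m)‖) atTop (𝓝 ‖v‖) := hs.norm
    have hne : ∀ᶠ m in atTop, slope c 0 (t m) ≠ 0 := by
      have h2 : ∀ᶠ y in 𝓝 ‖v‖, (0:ℝ) < y := eventually_gt_nhds (norm_pos_iff.2 hv)
      filter_upwards [hsnorm.eventually h2] with m hm
      exact norm_pos_iff.1 hm
    obtain ⟨N, hN⟩ := eventually_atTop.1 hne
    set u : ℕ → EuclideanSpace ℝ (Fin n) × ℝ := fun m => c (t (m + N)) with hudef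
    have hceq : ∀ m, u m - x = t (m + N) • slope c 0 (t (m + N)) := by
      intro m
      rw [hudef]
      simp only [slope_def_module, hc0, sub_zero]
      rw [smul_inv_smul₀ (htpos (m + N)).ne']
    refine ⟨hv, u, ?_, ?_, ?_, ?_⟩
    · intro m
      exact hcmem _ ⟨(htpos (m + N)).le, htlt (m + N)⟩
    · intro m
      have : u m - x ≠ 0 := by
        rw [hceq m]
        exact smul_ne_zero (htpos (m + N)).ne' (hN (m + N) (by omega))
      exact sub_ne_zero.1 this
    · have h1 : Tendsto (fun m => t (m + N) • slope c 0 (t (m + N))) atTop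
          (𝓝 ((0:ℝ) • v)) := by
        apply Tendsto.smul
        · exact ht0.comp (tendsto_add_atTop_nat N)
        · exact hs.comp (tendsto_add_atTop_nat N)
      rw [zero_smul] at h1
      have : Tendsto (fun m => x + (u m - x)) atTop (𝓝 (x + 0)) := by
        apply Tendsto.const_add
        simpa only [← hceq] using h1
      simpa using this
    · have heq : ∀ m, ‖u m - x‖⁻¹ • (u m - x)
          = ‖slope c 0 (t (m + N))‖⁻¹ • slope c 0 (t (m + N)) := by
        intro m
        rw [hceq m, norm_smul, Real.norm_eq_abs, abs_of_pos (htpos (m + N)), mul_inv,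
          smul_smul]
        congr 1
        field_simp
        rw [← div_div, div_self (htpos (m + N)).ne']
      simp only [heq]
      have hsN : Tendsto (fun m => slope c 0 (t (m + N))) atTop (𝓝 v) :=
        hs.comp (tendsto_add_atTop_nat N)
      exact (hsN.norm.inv₀ (norm_ne_zero_iff.2 hv)).smul hsN
  · -- bouligand ⊆ inward
    rintro (rfl | ⟨hv, u, humem, hune, hulim, hudir⟩)
    · exact ⟨1, one_pos, fun _ => x, contDiffOn_const, rfl, fun t _ => hxcl,
        (hasDerivAt_const (0:ℝ) x).hasDerivWithinAt⟩
    have hvn : (0:ℝ) < ‖v‖ := norm_pos_iff.2 hv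
    set w : EuclideanSpace ℝ (Fin n) × ℝ := ‖v‖⁻¹ • v with hw
    set r : ℕ → ℝ := fun m => ‖u m - x‖ with hr
    have hrpos : ∀ m, 0 < r m := fun m => norm_pos_iff.2 (sub_ne_zero.2 (hune m))
    set wm : ℕ → EuclideanSpace ℝ (Fin n) × ℝ := fun m => (r m)⁻¹ • (u m - x) with hwm
    have hueq : ∀ m, u m = x + (r m) • wm m := by
      intro m
      rw [hwm]
      simp only
      rw [smul_inv_smul₀ (hrpos m).ne', add_sub_cancel]
    have hr0 : Tendsto r atTop (𝓝 0) := by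
      have h1 : Tendsto (fun m => u m - x) atTop (𝓝 (x - x)) := hulim.sub tendsto_const_nhds
      rw [sub_self] at h1
      simpa [hr] using h1.norm
    set s : ℕ → ℝ := fun m => r m / ‖v‖ with hs
    have hspos : ∀ m, 0 < s m := fun m => div_pos (hrpos m) hvn
    have hs0 : Tendsto s atTop (𝓝[>] 0) := by
      apply tendsto_nhdsWithin_of_tendsto_nhds_of_eventually_within
      · simpa [hs] using hr0.div_const ‖v‖
      · exact Eventually.of_forall fun m => hspos m
    have hq : Tendsto (fun m => (γ (x.1 + s m • v.1) - γ x.1) / s m) atTop (𝓝 (g v.1)) :=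
      (hg v.1).comp hs0
    set A : ℕ → ℝ := fun m => ‖v‖ * ((wm m).2 + K * ‖w.1 - (wm m).1‖) with hA
    have hwmlim : Tendsto wm atTop (𝓝 w) := hudir
    have hA2 : Tendsto A atTop (𝓝 v.2) := by
      have h1 : Tendsto (fun m => (wm m).2) atTop (𝓝 w.2) :=
        (continuous_snd.tendsto w).comp hwmlim
      have h2 : Tendsto (fun m => ‖w.1 - (wm m).1‖) atTop (𝓝 ‖w.1 - w.1‖) :=
        (Tendsto.const_sub w.1 ((continuous_fst.tendsto w).comp hwmlim)).norm
      rw [sub_self, norm_zero] at h2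
      have h3 := (h1.add (h2.const_mul (K:ℝ))).const_mul ‖v‖
      have hw2 : ‖v‖ * (w.2 + (K:ℝ) * 0) = v.2 := by
        rw [hw]
        simp only [Prod.smul_snd, smul_eq_mul, mul_zero, add_zero]
        field_simp
      rw [hw2] at h3
      exact h3
    have hball : ∀ᶠ m in atTop, u m ∈ Metric.ball x δ :=
      hulim (Metric.ball_mem_nhds x hδ)
    have hineq : ∀ᶠ m in atTop, (γ (x.1 + s m • v.1) - γ x.1) / s m ≤ A m := by
      filter_upwards [hball] with m hm
      have hepi : γ ((u m).1) ≤ (u m).2 := (hmemcl (u m) hm).1 (humem m)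
      have hxv : x.1 + s m • v.1 = x.1 + r m • w.1 := by
        rw [hs, hw]
        simp only [Prod.smul_fst, smul_smul, smul_eq_mul]
        rw [div_eq_mul_inv]
      have hu1 : (u m).1 = x.1 + r m • (wm m).1 := by
        rw [hueq m]; simp [Prod.smul_fst]
      have hu2 : (u m).2 = x.2 + r m * (wm m).2 := by
        rw [hueq m]; simp [Prod.smul_snd]
      have hlip : γ (x.1 + r m • w.1) - γ (x.1 + r m • (wm m).1)
          ≤ (K:ℝ) * (r m * ‖w.1 - (wm m).1‖) := by
        have harg : (x.1 + r m • w.1) - (x.1 + r m • (wm m).1)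
            = r m • (w.1 - (wm m).1) := by
          rw [smul_sub]; abel
        calc γ (x.1 + r m • w.1) - γ (x.1 + r m • (wm m).1)
            ≤ |γ (x.1 + r m • w.1) - γ (x.1 + r m • (wm m).1)| := le_abs_self _
        _ = dist (γ (x.1 + r m • w.1)) (γ (x.1 + r m • (wm m).1)) := (Real.dist_eq _ _).symm
        _ ≤ (K:ℝ) * dist (x.1 + r m • w.1) (x.1 + r m • (wm m).1) := hγ.dist_le_mul _ _
        _ = (K:ℝ) * (r m * ‖w.1 - (wm m).1‖) := by
            rw [dist_eq_norm, harg, norm_smul, Real.norm_eq_abs, abs_of_pos (hrpos m)]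
      have hnum : γ (x.1 + s m • v.1) - γ x.1
          ≤ r m * ((wm m).2 + (K:ℝ) * ‖w.1 - (wm m).1‖) := by
        rw [hxv, hγx]
        have he2 := hepi
        rw [hu1, hu2] at he2
        have hre : r m * ((wm m).2 + (K:ℝ) * ‖w.1 - (wm m).1‖)
            = r m * (wm m).2 + (K:ℝ) * (r m * ‖w.1 - (wm m).1‖) := by ring
        rw [hre]
        linarith
      rw [div_le_iff₀ (hspos m)]
      have hAs : A m * s m = r m * ((wm m).2 + (K:ℝ) * ‖w.1 - (wm m).1‖) := by
        rw [hA, hs]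
        field_simp
      rw [hAs]
      exact hnum
    have hgle : g v.1 ≤ v.2 := le_of_tendsto_of_tendsto hq hA2 hineq
    -- the curve construction
    set φ : ℝ → ℝ := fun u => γ (x.1 + u • v.1) - x.2 - u * v.2 with hφ
    set L : ℝ := (K : ℝ) * ‖v.1‖ + |v.2| with hLdef
    have hLnn : 0 ≤ L := by positivity
    have hφL : ∀ u, 0 < u → φ u ≤ L * u := by
      intro u hu
      have h1 : γ (x.1 + u • v.1) - γ x.1 ≤ (K:ℝ) * (u * ‖v.1‖) := by
        calc γ (x.1 + u • v.1) - γ x.1 ≤ |γ (x.1 + u • v.1) - γ x.1| := le_abs_self _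
        _ = dist (γ (x.1 + u • v.1)) (γ x.1) := (Real.dist_eq _ _).symm
        _ ≤ (K:ℝ) * dist (x.1 + u • v.1) x.1 := hγ.dist_le_mul _ _
        _ = (K:ℝ) * (u * ‖v.1‖) := by
            rw [dist_eq_norm, add_sub_cancel_left, norm_smul, Real.norm_eq_abs,
              abs_of_pos hu]
      have h2 : -(u * v.2) ≤ u * |v.2| := by
        rw [← mul_neg]
        exact mul_le_mul_of_nonneg_left (neg_le_abs v.2) hu.le
      rw [hφ]
      simp only
      rw [← hγx]
      nlinarith [h1, h2]
    have hsmallφ : ∀ ε > (0:ℝ), ∃ δ' > (0:ℝ), ∀ u, 0 < u → u < δ' → φ u ≤ ε * u := by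
      intro ε hε
      have hlim : Tendsto (fun u => φ u / u) (𝓝[>] (0:ℝ)) (𝓝 (g v.1 - v.2)) := by
        have h1 := (hg v.1).sub_const v.2
        apply h1.congr'
        filter_upwards [self_mem_nhdsWithin] with u hu
        rw [mem_Ioi] at hu
        rw [hφ]
        simp only
        rw [← hγx]
        field_simp
      have hev : ∀ᶠ u in 𝓝[>] (0:ℝ), φ u / u < ε :=
        hlim.eventually (eventually_lt_nhds (by linarith))
      obtain ⟨b, hb, hsub⟩ := mem_nhdsGT_iff_exists_Ioo_subset.1 hev
      refine ⟨b, hb, fun u hu hub => ?_⟩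
      have := hsub ⟨hu, hub⟩
      simp only [mem_setOf_eq] at this
      exact ((div_lt_iff₀ hu).1 this).le.trans (by rw [mul_comm])
    obtain ⟨η, hηC, hη0, hηd, hηφ, hηb⟩ := exists_c1_majorant φ L hLnn hφL hsmallφ
    set C : ℝ := ‖v.1‖ + |v.2| + L with hCdef
    have hCnn : 0 ≤ C := by positivity
    set ε : ℝ := δ / (C + 1) with hεdef
    have hεpos : 0 < ε := by positivity
    have hεC : ε * (C + 1) = δ := div_mul_cancel₀ δ (by positivity)
    set c : ℝ → EuclideanSpace ℝ (Fin n) × ℝ :=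
      fun t => (x.1 + t • v.1, x.2 + t * v.2 + η t) with hcdef
    have hcC : ContDiff ℝ 1 c := by
      apply ContDiff.prodMk
      · exact contDiff_const.add (contDiff_id.smul contDiff_const)
      · exact (contDiff_const.add (contDiff_id.mul contDiff_const)).add hηC
    have hc0 : c 0 = x := by
      rw [hcdef]
      simp [hη0]
    have hcd : HasDerivAt c v 0 := by
      have h1 : HasDerivAt (fun t : ℝ => x.1 + t • v.1) v.1 0 := by
        simpa using (HasDerivAt.const_add x.1 ((hasDerivAt_id (0:ℝ)).smul_const v.1))
      have h2 : HasDerivAt (fun t : ℝ => x.2 + t * v.2 + η t) v.2 0 := by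
        have := (HasDerivAt.const_add x.2 ((hasDerivAt_id (0:ℝ)).mul_const v.2)).add hηd
        rw [one_mul, add_zero] at this
        exact this
      have := h1.prodMk h2
      simpa using this
    refine ⟨ε, hεpos, c, hcC.contDiffOn, hc0, ?_, hcd.hasDerivWithinAt⟩
    intro t ht
    rcases eq_or_lt_of_le ht.1 with heq0 | htpos
    · rw [← heq0, hc0]
      exact hxcl
    have hηt := hηb t ht.1
    have hballt : c t ∈ Metric.ball x δ := by
      rw [Metric.mem_ball, dist_eq_norm]
      have hsub : c t - x = (t • v.1, t * v.2 + η t) := by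
        rw [hcdef]
        simp only [Prod.mk_sub_mk, Prod.fst, Prod.snd]
        rw [Prod.ext_iff]
        constructor
        · simp
        · simp only [Prod.snd_sub]
          ring
      rw [hsub, Prod.norm_def]
      have hb1 : ‖t • v.1‖ ≤ t * C := by
        rw [norm_smul, Real.norm_eq_abs, abs_of_pos htpos]
        nlinarith [abs_nonneg v.2, hLnn, norm_nonneg v.1]
      have hb2 : |t * v.2 + η t| ≤ t * C := by
        calc |t * v.2 + η t| ≤ |t * v.2| + |η t| := abs_add_le _ _
        _ = t * |v.2| + η t := by
            rw [abs_mul, abs_of_pos htpos, abs_of_nonneg hηt.1]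
        _ ≤ t * |v.2| + L * t := by linarith [hηt.2]
        _ ≤ t * C := by nlinarith [norm_nonneg v.1]
      have htC : t * C < δ := by
        have h1 : t * C ≤ ε * C := mul_le_mul_of_nonneg_right ht.2.le hCnn
        nlinarith [hεpos]
      exact lt_of_le_of_lt (max_le hb1 hb2) htC
    have hepit : γ ((c t).1) ≤ (c t).2 := by
      have h1 := hηφ t htpos
      rw [hφ] at h1
      simp only at h1
      rw [hcdef]
      simp only
      linarith
    exact (hmemcl (c t) hballt).2 hepit
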